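/- For every constant C > 0, the function g(x) := ½·( −[2C−1+x(2C+1)] + √([2C−1+x(2C+1)]² + 8C(x+1)) ) maps the interval (0,∞) bijectively onto the open interval ( 2C/(2C+1), L ), where L = ( −(2C−1) + √((2C−1)² + 8C) )/2. -/

import Mathlib

open Set

/-- The function g(x) for a parameter C. -/
noncomputable def gFun (C x : ℝ) : ℝ :=
  (1 / 2) * (-(2 * C - 1 + x * (2 * C + 1)) +
    Real.sqrt ((2 * C - 1 + x * (2 * C + 1)) ^ 2 + 8 * C * (x + 1)))

/-- Explicit inverse of g. -/
noncomputable def hInv (C y : ℝ) : ℝ := ((1 - y) * (y + 2*C)) / ((2*C+1)*y - 2*C)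

lemma quad_eq (C x y : ℝ) (hC : 0 < C) (hx : 0 < x + 1) (hy : 0 < y)
    (hq : y^2 + (2*C - 1 + x*(2*C+1)) * y = 2*C*(x+1)) : gFun C x = y := by
  have hyB : 0 < 2*y + (2*C - 1 + x*(2*C+1)) := by nlinarith [mul_pos hC hx]
  have hsq : (2*C - 1 + x*(2*C+1))^2 + 8*C*(x+1) = (2*y + (2*C - 1 + x*(2*C+1)))^2 := by
    nlinarith [hq]
  rw [gFun, hsq, Real.sqrt_sq hyB.le]; ring

lemma gFun_props (C x : ℝ) (hC : 0 < C) (hx : 0 < x) :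
    0 < gFun C x ∧
    (gFun C x)^2 + (2*C - 1 + x*(2*C+1)) * gFun C x = 2*C*(x+1) ∧
    0 < (2*C+1) * gFun C x - 2*C ∧ gFun C x < 1 := by
  set B := 2*C - 1 + x*(2*C+1) with hB
  set D := B^2 + 8*C*(x+1) with hDdef
  have hD : 0 ≤ D := by nlinarith [sq_nonneg B]
  have hs := Real.sq_sqrt hD
  have hs0 := Real.sqrt_nonneg D
  have hg : gFun C x = (1/2) * (-B + Real.sqrt D) := by
    simp only [gFun, hB, hDdef]
  have hy : 0 < gFun C x := by rw [hg]; nlinarith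
  have hq : (gFun C x)^2 + B * gFun C x = 2*C*(x+1) := by rw [hg]; nlinarith
  set y := gFun C x
  have hQ : 0 < (2*C+1) * y - 2*C := by nlinarith [hq, mul_pos hx hy]
  refine ⟨hy, hq, hQ, ?_⟩
  nlinarith [hq, mul_pos hx hQ]

theorem stmt_4 (C : ℝ) (hC : 0 < C) :
    BijOn (gFun C) (Ioi (0 : ℝ))
      (Ioo (2 * C / (2 * C + 1))
        ((-(2 * C - 1) + Real.sqrt ((2 * C - 1) ^ 2 + 8 * C)) / 2)) := by
  have hC1 : (0:ℝ) < 2*C + 1 := by linarith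
  have hL : (-(2 * C - 1) + Real.sqrt ((2 * C - 1) ^ 2 + 8 * C)) / 2 = 1 := by
    have h : (2*C - 1)^2 + 8*C = (2*C+1)^2 := by ring
    rw [h, Real.sqrt_sq hC1.le]; ring
  rw [hL]
  have hmem : ∀ y ∈ Ioo (2 * C / (2 * C + 1)) (1:ℝ),
      0 < (2*C+1)*y - 2*C ∧ 0 < hInv C y := by
    intro y hy
    have h1 : 2*C < (2*C+1)*y := by
      have := hy.1
      rw [div_lt_iff₀ hC1] at this; linarith
    have hQ : 0 < (2*C+1)*y - 2*C := by linarith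
    have hy0 : 0 < y := by nlinarith
    have hN : 0 < (1 - y) * (y + 2*C) := by
      apply mul_pos <;> [linarith [hy.2]; linarith]
    exact ⟨hQ, div_pos hN hQ⟩
  have hmaps : MapsTo (gFun C) (Ioi (0:ℝ)) (Ioo (2 * C / (2 * C + 1)) 1) := by
    intro x hx
    obtain ⟨hy, hq, hQ, h1⟩ := gFun_props C x hC hx
    refine ⟨?_, h1⟩
    rw [div_lt_iff₀ hC1]
    nlinarith [hQ]
  have hmaps' : MapsTo (hInv C) (Ioo (2 * C / (2 * C + 1)) 1) (Ioi (0:ℝ)) := by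
    intro y hy
    exact (hmem y hy).2
  apply Set.InvOn.bijOn _ hmaps hmaps'
  constructor
  · -- LeftInvOn hInv (gFun C) (Ioi 0)
    intro x hx
    obtain ⟨hy, hq, hQ, h1⟩ := gFun_props C x hC hx
    rw [hInv, div_eq_iff hQ.ne']
    nlinarith [hq]
  · -- RightInvOn hInv (gFun C) (Ioo _ 1)
    intro y hy
    obtain ⟨hQ, hx⟩ := hmem y hy
    have hy0 : 0 < y := by nlinarith [hy.1, div_nonneg (by linarith : (0:ℝ) ≤ 2*C) hC1.le]
    apply quad_eq C _ y hC (by linarith) hy0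
    rw [hInv]
    linear_combination (div_mul_cancel₀ ((1 - y) * (y + 2*C)) hQ.ne')
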